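/- Let 𝒜 be a Hilbert evolution algebra with a natural orthonormal basis 𝓑 = {e_i}_{i∈ℕ}. If G(𝒜,𝓑) contains a ray (an infinite directed path {v₁, v₂, …} with pairwise distinct vertices), then there exists u ∈ 𝒜 with u^n ≠ 0 for every n ∈ ℕ; in particular 𝒜 is not nil (and not nilpotent). -/

import Mathlib

noncomputable section

open scoped ENat

/-! ### Digraph notions associated to a matrix of structural constants

The associated digraph `G(𝒜,𝓑)` has vertex set `ℕ` and a directed edge `(i,k)` iff
`ω i k ≠ 0`. -/

/-- `DsetU ω m U` is the set `D^m(U)` of `m`-th generation descendants of `U`: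
`D^0(U) = U` and `D^{m+1}(U) = {k | ∃ i ∈ D^m(U), ω i k ≠ 0}`. -/
def DsetU (ω : ℕ → ℕ → ℂ) : ℕ → Set ℕ → Set ℕ
  | 0, U => U
  | m + 1, U => {k | ∃ i ∈ DsetU ω m U, ω i k ≠ 0}

/-- `Dm ω m i = D^m(i)`, the `m`-th generation descendants of the vertex `i`. -/
def Dm (ω : ℕ → ℕ → ℂ) (m i : ℕ) : Set ℕ := DsetU ω m {i}

/-- `Desc ω i = D(i) = ⋃_{m ≥ 1} D^m(i)`, the set of descendants of `i`. -/
def Desc (ω : ℕ → ℕ → ℂ) (i : ℕ) : Set ℕ := ⋃ m ∈ {m : ℕ | 1 ≤ m}, Dm ω m i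

/-- `gdist ω i u` is the length of a shortest directed path (walk) from `i` to `u`. -/
def gdist (ω : ℕ → ℕ → ℂ) (i u : ℕ) : ℕ := sInf {n : ℕ | u ∈ Dm ω n i}

/-- The depth `δ(G_i) = sup {dist(i,u) : u ∈ D(i)}` of the subgraph `G_i` induced on the
descendants of `i`, as an extended natural number (`⊤` when unbounded). -/
def depth (ω : ℕ → ℕ → ℂ) (i : ℕ) : ℕ∞ := ⨆ u ∈ Desc ω i, (gdist ω i u : ℕ∞)

/-- `p 0, p 1, …, p n` is an oriented cycle: a non-empty directed path in which the only
repeated vertices are the first and the last one. -/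
def IsOrientedCycle (ω : ℕ → ℕ → ℂ) (n : ℕ) (p : ℕ → ℕ) : Prop :=
  0 < n ∧ (∀ m < n, ω (p m) (p (m + 1)) ≠ 0) ∧ p n = p 0 ∧
    ∀ a b, a < b → b < n → p a ≠ p b

/-- The digraph associated to `ω` contains an oriented cycle. -/
def HasOrientedCycle (ω : ℕ → ℕ → ℂ) : Prop := ∃ n p, IsOrientedCycle ω n p

/-! ### Algebra notions -/

variable {H : Type*} [NormedAddCommGroup H] [InnerProductSpace ℂ H] [CompleteSpace H]

/-- The structural constants of a Hilbert evolution algebra with product `mul` relative to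
the natural orthonormal basis `e`: `ω i k` is the `k`-th coordinate of `e i · e i`,
so that `e i · e i = ∑'_k ω i k • e k`. -/
def structConst (mul : H →ₗ[ℂ] H →ₗ[ℂ] H) (e : HilbertBasis ℕ ℂ H) (i k : ℕ) : ℂ :=
  e.repr (mul (e i) (e i)) k

/-- Principal powers: `ppow mul v n = v^n` for `n ≥ 1` (with the junk value `v` at `n = 0`):
`v^1 = v` and `v^{n+1} = v^n · v`. -/
def ppow (mul : H →ₗ[ℂ] H →ₗ[ℂ] H) (v : H) : ℕ → H
  | 0 => v
  | 1 => v
  | n + 2 => mul (ppow mul v (n + 1)) v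

/-- The algebra is nil: every element has a vanishing principal power. -/
def IsNil (mul : H →ₗ[ℂ] H →ₗ[ℂ] H) : Prop := ∀ v : H, ∃ n : ℕ, 1 ≤ n ∧ ppow mul v n = 0

/-- The product `S·T` of two subspaces: the span of all products `x·y`, `x ∈ S`, `y ∈ T`. -/
def mulSub (mul : H →ₗ[ℂ] H →ₗ[ℂ] H) (S T : Submodule ℂ H) : Submodule ℂ H :=
  Submodule.span ℂ {z : H | ∃ x ∈ S, ∃ y ∈ T, z = mul x y}

/-- The powers `𝒜^n` (for `n ≥ 1`, with the junk value `⊤` at `n = 0`):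
`𝒜^1 = 𝒜` and `𝒜^{n+1} = ∑_{i=1}^{n} 𝒜^i 𝒜^{n+1-i}`. -/
def apow (mul : H →ₗ[ℂ] H →ₗ[ℂ] H) (n : ℕ) : Submodule ℂ H :=
  n.strongRecOn fun n ih =>
    match n, ih with
    | 0, _ => ⊤
    | 1, _ => ⊤
    | m + 2, ih =>
      ⨆ (i : ℕ) (h1 : 1 ≤ i) (h2 : i ≤ m + 1),
        mulSub mul (ih i (by omega)) (ih (m + 2 - i) (by omega))

/-- The algebra is nilpotent: `𝒜^n = 0` for some `n`. -/
def IsNilpotent' (mul : H →ₗ[ℂ] H →ₗ[ℂ] H) : Prop := ∃ n : ℕ, 1 ≤ n ∧ apow mul n = ⊥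

/-- The right powers `𝒜^{<n>}` (for `n ≥ 1`, with the junk value `⊤` at `n = 0`):
`𝒜^{<1>} = 𝒜` and `𝒜^{<n+1>} = 𝒜^{<n>}𝒜`. -/
def rapow (mul : H →ₗ[ℂ] H →ₗ[ℂ] H) : ℕ → Submodule ℂ H
  | 0 => ⊤
  | 1 => ⊤
  | n + 2 => mulSub mul (rapow mul (n + 1)) ⊤

/-- The algebra is right nilpotent: `𝒜^{<n>} = 0` for some `n`. -/
def IsRightNilpotent (mul : H →ₗ[ℂ] H →ₗ[ℂ] H) : Prop := ∃ n : ℕ, 1 ≤ n ∧ rapow mul n = ⊥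

/-- The index of right nilpotency `n_r(𝒜) = min {n : 𝒜^{<n>} = 0}`. -/
def rNilIndex (mul : H →ₗ[ℂ] H →ₗ[ℂ] H) : ℕ := sInf {n : ℕ | 1 ≤ n ∧ rapow mul n = ⊥}

/-- Powers of a subset `I ⊆ 𝒜` (for `n ≥ 1`, with the junk value `I` at `n = 0`):
`I^{<1>} = I` and `I^{<n+1>}` is the set of finite sums `∑_j x_j · y_j` with
`x_j ∈ I^{<n>}` and `y_j ∈ I`. -/
def setPow (mul : H →ₗ[ℂ] H →ₗ[ℂ] H) (I : Set H) : ℕ → Set H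
  | 0 => I
  | 1 => I
  | n + 2 => {v : H | ∃ (m : ℕ) (x y : Fin m → H),
      (∀ j, x j ∈ setPow mul I (n + 1)) ∧ (∀ j, y j ∈ I) ∧
        v = ∑ j, mul (x j) (y j)}

end

noncomputable section

variable {H : Type*} [NormedAddCommGroup H] [InnerProductSpace ℂ H] [CompleteSpace H]


/-! ### Auxiliary material for the proof -/

set_option linter.unusedSectionVars false
set_option maxHeartbeats 1600000

lemma ppow_one' (mul : H →ₗ[ℂ] H →ₗ[ℂ] H) (v : H) : ppow mul v 1 = v := rfl

lemma ppow_succ' (mul : H →ₗ[ℂ] H →ₗ[ℂ] H) (v : H) (n : ℕ) (hn : 1 ≤ n) :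
    ppow mul v (n + 1) = mul (ppow mul v n) v := by
  obtain ⟨m, rfl⟩ := Nat.exists_eq_add_of_le' hn
  rfl

lemma apow_one' (mul : H →ₗ[ℂ] H →ₗ[ℂ] H) : apow mul 1 = ⊤ := by
  rw [apow, Nat.strongRecOn_eq]

lemma apow_add_two' (mul : H →ₗ[ℂ] H →ₗ[ℂ] H) (m : ℕ) :
    apow mul (m + 2) = ⨆ (i : ℕ) (_ : 1 ≤ i) (_ : i ≤ m + 1),
      mulSub mul (apow mul i) (apow mul (m + 2 - i)) := by
  rw [apow, Nat.strongRecOn_eq]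
  rfl

lemma ppow_mem_apow (mul : H →ₗ[ℂ] H →ₗ[ℂ] H) (u : H) :
    ∀ n : ℕ, 1 ≤ n → ppow mul u n ∈ apow mul n := by
  intro n hn
  induction n, hn using Nat.le_induction with
  | base => rw [apow_one']; trivial
  | succ n hn IH =>
    obtain ⟨m, rfl⟩ := Nat.exists_eq_add_of_le' hn
    rw [ppow_succ' mul u (m + 1) (by omega)]
    rw [show m + 1 + 1 = m + 2 by rfl, apow_add_two']
    apply Submodule.mem_iSup_of_mem (m + 1)
    apply Submodule.mem_iSup_of_mem (by omega)
    apply Submodule.mem_iSup_of_mem (by omega)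
    apply Submodule.subset_span
    refine ⟨ppow mul u (m + 1), IH, u, ?_, rfl⟩
    rw [show m + 2 - (m + 1) = 1 by omega, apow_one']
    trivial

lemma mul_basis_right (mul : H →ₗ[ℂ] H →ₗ[ℂ] H)
    (hcomm : ∀ x y : H, mul x y = mul y x)
    (hcont : ∀ x : H, Continuous fun y => mul x y)
    (e : HilbertBasis ℕ ℂ H)
    (hnat : ∀ i j : ℕ, i ≠ j → mul (e i) (e j) = 0)
    (x : H) (j : ℕ) :
    mul x (e j) = (inner ℂ (e j) x : ℂ) • mul (e j) (e j) := by
  have hT : Continuous fun x : H => mul x (e j) := by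
    have : (fun x : H => mul x (e j)) = fun x => mul (e j) x := by
      funext x; rw [hcomm]
    rw [this]; exact hcont (e j)
  let T : H →L[ℂ] H := { toLinearMap := mul.flip (e j), cont := hT }
  let S : H →L[ℂ] H := (innerSL ℂ (e j)).smulRight (mul (e j) (e j))
  have : T = S := by
    apply ContinuousLinearMap.ext_on
      (Submodule.dense_iff_topologicalClosure_eq_top.mpr e.dense_span)
    rintro _ ⟨k, rfl⟩
    have horth := orthonormal_iff_ite.mp e.orthonormal j k
    simp only [T, S, ContinuousLinearMap.coe_mk', LinearMap.flip_apply,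
      ContinuousLinearMap.smulRight_apply, innerSL_apply_apply, horth]
    by_cases hk : j = k
    · subst hk; simp; rfl
    · rw [if_neg hk, zero_smul]; exact hnat k j (Ne.symm hk)
  have := congrFun (congrArg (fun f : H →L[ℂ] H => (f : H → H)) this) x
  simp [T, S] at this; exact this

def Lc (mul : H →ₗ[ℂ] H →ₗ[ℂ] H) (hcont : ∀ x : H, Continuous fun y => mul x y) (x : H) :
    H →L[ℂ] H := { toLinearMap := mul x, cont := hcont x }

lemma coord_mul (mul : H →ₗ[ℂ] H →ₗ[ℂ] H)
    (hcont : ∀ x : H, Continuous fun y => mul x y)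
    (e : HilbertBasis ℕ ℂ H)
    (ω : ℕ → ℕ → ℂ)
    (hmb : ∀ (x : H) (j : ℕ), mul x (e j) = (inner ℂ (e j) x : ℂ) • mul (e j) (e j))
    (hsq' : ∀ i k : ℕ, (inner ℂ (e k) (mul (e i) (e i)) : ℂ) = ω i k)
    (c : ℕ → ℂ) (q : ℕ → ℕ) (x y : H)
    (hy : HasSum (fun t => c t • e (q t)) y) (j : ℕ) :
    HasSum (fun t => c t * (inner ℂ (e (q t)) x : ℂ) * ω (q t) j)
      (inner ℂ (e j) (mul x y) : ℂ) := by
  have h1 : HasSum (fun t => (Lc mul hcont x) (c t • e (q t))) ((Lc mul hcont x) y) :=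
    hy.mapL _
  have h2 := h1.mapL (innerSL ℂ (e j))
  convert h2 using 3 with t
  · rfl
  · simp only [Lc, innerSL_apply_apply, ContinuousLinearMap.coe_mk', map_smul, hmb x (q t),
      inner_smul_right, hsq', smul_eq_mul]
    ring
  · rfl

/-! #### Case 2 : triangular structure along the ray -/

def chat (ω : ℕ → ℕ → ℂ) (p : ℕ → ℕ) (a : ℕ → ℂ) : ℕ → ℕ → ℂ
  | 0, j => a j
  | 1, j => a j
  | m + 2, j => ∑ i ∈ Finset.range j, a i * chat ω p a (m + 1) i * ω (p i) (p j)

lemma chat_congr (ω : ℕ → ℕ → ℂ) (p : ℕ → ℕ) :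
    ∀ m j (a a' : ℕ → ℂ), (∀ i ≤ j, a i = a' i) → chat ω p a m j = chat ω p a' m j := by
  intro m
  induction m using Nat.twoStepInduction with
  | zero => intro j a a' h; simp [chat, h j le_rfl]
  | one => intro j a a' h; simp [chat, h j le_rfl]
  | more m ih ih2 =>
    intro j a a' h
    simp only [chat]
    refine Finset.sum_congr rfl fun i hi => ?_
    rw [Finset.mem_range] at hi
    rw [h i hi.le, ih2 i a a' fun i' hi' => h i' (hi'.trans hi.le)]

lemma chat_congr_lt (ω : ℕ → ℕ → ℂ) (p : ℕ → ℕ) (m j : ℕ) (a a' : ℕ → ℂ)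
    (h : ∀ i < j, a i = a' i) : chat ω p a (m + 2) j = chat ω p a' (m + 2) j := by
  simp only [chat]
  refine Finset.sum_congr rfl fun i hi => ?_
  rw [Finset.mem_range] at hi
  rw [h i hi, chat_congr ω p (m + 1) i a a' fun i' hi' => h i' (lt_of_le_of_lt hi' hi)]

def pick (α β : ℂ) (ε : ℝ) : ℂ := if α * ε + β ≠ 0 then (ε : ℂ) else (ε / 2 : ℂ)

lemma pick_norm (α β : ℂ) (ε : ℝ) (hε : 0 < ε) : ‖pick α β ε‖ ≤ ε := by
  unfold pick
  split
  · simp [abs_of_pos hε]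
  · rw [norm_div]
    simp [abs_of_pos hε]
    linarith

lemma pick_spec (α β : ℂ) (ε : ℝ) (hα : α ≠ 0) (hε : 0 < ε) : α * pick α β ε + β ≠ 0 := by
  unfold pick
  split
  · assumption
  · rename_i h
    push_neg at h
    intro hcon
    apply hα
    have hε' : (ε : ℂ) ≠ 0 := by exact_mod_cast hε.ne'
    have hb : β = -(α * ε) := by linear_combination h
    rw [hb] at hcon
    have : α * (ε : ℂ) = 0 := by linear_combination -2 * hcon
    rcases mul_eq_zero.mp this with h1 | h1
    · exact h1
    · exact absurd h1 hε'

def aseq (ω : ℕ → ℕ → ℂ) (p : ℕ → ℕ) : ℕ → ℂ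
  | 0 => 1
  | m + 1 =>
    let pre : ℕ → ℂ := fun i => if h : i < m + 1 then aseq ω p i else 0
    pick (chat ω p pre (m + 2) (m + 1) * ω (p (m + 1)) (p (m + 2)))
      (∑ i ∈ Finset.range (m + 1), pre i * chat ω p pre (m + 2) i * ω (p i) (p (m + 2)))
      ((1 / 2) ^ (m + 1))
  decreasing_by exact h

lemma aseq_norm (ω : ℕ → ℕ → ℂ) (p : ℕ → ℕ) (m : ℕ) :
    ‖aseq ω p m‖ ≤ (1 / 2 : ℝ) ^ m := by
  cases m with
  | zero => simp [aseq]
  | succ m =>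
    rw [aseq]
    exact pick_norm _ _ _ (by positivity)

lemma aseq_d (ω : ℕ → ℕ → ℂ) (p : ℕ → ℕ) (hray : ∀ i : ℕ, ω (p i) (p (i + 1)) ≠ 0) :
    ∀ n : ℕ, chat ω p (aseq ω p) (n + 1) n ≠ 0 := by
  intro n
  induction n using Nat.twoStepInduction with
  | zero => simp [chat, aseq]
  | one =>
    have : chat ω p (aseq ω p) 2 1 = aseq ω p 0 * aseq ω p 0 * ω (p 0) (p 1) := by
      simp [chat]
    rw [this]
    show aseq ω p 0 * aseq ω p 0 * ω (p 0) (p 1) ≠ 0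
    have h0 : aseq ω p 0 = 1 := by simp [aseq]
    rw [h0]
    simpa using hray 0
  | more m ih ih2 =>
    set a := aseq ω p with ha
    set pre : ℕ → ℂ := fun i => if h : i < m + 1 then aseq ω p i else 0 with hpre
    have hagree : ∀ i < m + 1, pre i = a i := by
      intro i hi; simp only [hpre, ha, dif_pos hi]
    have hchat : ∀ j ≤ m + 1, chat ω p pre (m + 2) j = chat ω p a (m + 2) j := by
      intro j hj
      exact chat_congr_lt ω p m j pre a fun i hi => hagree i (lt_of_lt_of_le hi hj)
    have hstep : chat ω p a (m + 3) (m + 2)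
        = (chat ω p pre (m + 2) (m + 1) * ω (p (m + 1)) (p (m + 2))) * a (m + 1)
          + (∑ i ∈ Finset.range (m + 1),
              pre i * chat ω p pre (m + 2) i * ω (p i) (p (m + 2))) := by
      show (∑ i ∈ Finset.range (m + 2), a i * chat ω p a (m + 2) i * ω (p i) (p (m + 2))) = _
      rw [Finset.sum_range_succ, hchat (m + 1) le_rfl]
      have : ∀ i ∈ Finset.range (m + 1),
          pre i * chat ω p pre (m + 2) i * ω (p i) (p (m + 2))
          = a i * chat ω p a (m + 2) i * ω (p i) (p (m + 2)) := by
        intro i hi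
        rw [Finset.mem_range] at hi
        rw [hagree i hi, hchat i hi.le]
      rw [Finset.sum_congr rfl this]
      ring
    have hα : chat ω p pre (m + 2) (m + 1) * ω (p (m + 1)) (p (m + 2)) ≠ 0 := by
      rw [hchat (m + 1) le_rfl]
      exact mul_ne_zero ih2 (hray (m + 1))
    have haval : a (m + 1) = pick (chat ω p pre (m + 2) (m + 1) * ω (p (m + 1)) (p (m + 2)))
        (∑ i ∈ Finset.range (m + 1),
          pre i * chat ω p pre (m + 2) i * ω (p i) (p (m + 2))) ((1 / 2) ^ (m + 1)) := by
      rw [ha]; rw [aseq]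
    rw [hstep, haval]
    exact pick_spec _ _ _ hα (by positivity)

lemma summable_u2 (e : HilbertBasis ℕ ℂ H) (p : ℕ → ℕ) (a : ℕ → ℂ)
    (ha : ∀ m, ‖a m‖ ≤ (1 / 2 : ℝ) ^ m) :
    Summable (fun i => a i • e (p i)) := by
  apply Summable.of_norm
  apply Summable.of_nonneg_of_le (fun i => norm_nonneg _) (fun i => ?_)
    (summable_geometric_of_lt_one (by norm_num) (by norm_num : (1 / 2 : ℝ) < 1))
  rw [norm_smul]
  have : ‖e (p i)‖ = 1 := e.orthonormal.1 (p i)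
  rw [this, mul_one]
  exact ha i

lemma coord_u2 (e : HilbertBasis ℕ ℂ H) (p : ℕ → ℕ) (hinj : Function.Injective p)
    (a : ℕ → ℂ) (u : H) (hu : HasSum (fun i => a i • e (p i)) u) (j : ℕ) :
    (inner ℂ (e (p j)) u : ℂ) = a j := by
  have h2 := hu.mapL (innerSL ℂ (e (p j)))
  have h3 : HasSum (fun i => a i * (inner ℂ (e (p j)) (e (p i)) : ℂ))
      (inner ℂ (e (p j)) u : ℂ) := by
    simpa [inner_smul_right] using h2
  have h4 : HasSum (fun i => a i * (inner ℂ (e (p j)) (e (p i)) : ℂ)) (a j) := by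
    have hz : ∀ i, i ≠ j → a i * (inner ℂ (e (p j)) (e (p i)) : ℂ) = 0 := by
      intro i hi
      have : (inner ℂ (e (p j)) (e (p i)) : ℂ) = 0 := by
        have := orthonormal_iff_ite.mp e.orthonormal (p j) (p i)
        rw [this, if_neg (fun hc => hi (hinj hc).symm)]
      rw [this, mul_zero]
    have h5 := hasSum_single (f := fun i => a i * (inner ℂ (e (p j)) (e (p i)) : ℂ)) j hz
    have h6 : a j * (inner ℂ (e (p j)) (e (p j)) : ℂ) = a j := by
      have := orthonormal_iff_ite.mp e.orthonormal (p j) (p j)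
      rw [this, if_pos rfl, mul_one]
    exact h6 ▸ h5
  exact h3.unique h4

lemma case2 (mul : H →ₗ[ℂ] H →ₗ[ℂ] H)
    (hcomm : ∀ x y : H, mul x y = mul y x)
    (hcont : ∀ x : H, Continuous fun y => mul x y)
    (e : HilbertBasis ℕ ℂ H)
    (ω : ℕ → ℕ → ℂ)
    (hsq : ∀ i k : ℕ, (inner ℂ (e k) (mul (e i) (e i)) : ℂ) = ω i k)
    (hmb : ∀ (x : H) (j : ℕ), mul x (e j) = (inner ℂ (e j) x : ℂ) • mul (e j) (e j))
    (p : ℕ → ℕ) (hinj : Function.Injective p)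
    (hray : ∀ i : ℕ, ω (p i) (p (i + 1)) ≠ 0)
    (htri : ∀ i j : ℕ, j ≤ i → ω (p i) (p j) = 0) :
    ∃ u : H, ∀ n : ℕ, 1 ≤ n → ppow mul u n ≠ 0 := by
  set a := aseq ω p with ha
  have hsum := summable_u2 e p a (aseq_norm ω p)
  set u := ∑' i, a i • e (p i) with hudef
  have hu : HasSum (fun i => a i • e (p i)) u := hsum.hasSum
  have claim : ∀ n, 1 ≤ n → ∀ j, (inner ℂ (e (p j)) (ppow mul u n) : ℂ) = chat ω p a n j := by
    intro n hn
    induction n, hn using Nat.le_induction with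
    | base =>
      intro j
      rw [ppow_one']
      rw [coord_u2 e p hinj a u hu j]
      simp [chat]
    | succ n hn IH =>
      intro j
      rw [ppow_succ' mul u n hn]
      have hcm := coord_mul mul hcont e ω hmb hsq a p
        (ppow mul u n) u hu (p j)
      have hzero : ∀ t ∉ Finset.range j,
          a t * (inner ℂ (e (p t)) (ppow mul u n) : ℂ) * ω (p t) (p j) = 0 := by
        intro t ht
        rw [Finset.mem_range, not_lt] at ht
        rw [htri t j ht, mul_zero]
      have heq := hcm.unique (hasSum_sum_of_ne_finset_zero hzero)
      rw [heq]
      obtain ⟨m, rfl⟩ := Nat.exists_eq_add_of_le' hn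
      show _ = ∑ i ∈ Finset.range j, a i * chat ω p a (m + 1) i * ω (p i) (p j)
      refine Finset.sum_congr rfl fun t ht => ?_
      rw [IH t]
  refine ⟨u, fun n hn hcon => ?_⟩
  have h1 := claim n hn (n - 1)
  rw [hcon] at h1
  simp only [inner_zero_right] at h1
  have h2 := aseq_d ω p hray (n - 1)
  rw [show n - 1 + 1 = n by omega] at h2
  exact h2 h1.symm

/-! #### Case 1 : an oriented cycle exists -/

lemma cycle_machine (ω : ℕ → ℕ → ℂ) (p : ℕ → ℕ)
    (hray : ∀ i : ℕ, ω (p i) (p (i + 1)) ≠ 0)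
    (hc : ∃ i j : ℕ, j ≤ i ∧ ω (p i) (p j) ≠ 0) :
    ∃ (k : ℕ) (g : ℕ → ℕ), 1 ≤ k ∧ (∀ t < k, ω (g t) (g (t + 1)) ≠ 0) ∧ g k = g 0 ∧
      (∀ a b, a < k → b < k → g a = g b → a = b) ∧
      (∀ a b, a < k → b < k → ω (g a) (g b) ≠ 0 → b = (a + 1) % k) := by
  classical
  set K : Set ℕ := {L : ℕ | 1 ≤ L ∧ ∃ g : ℕ → ℕ,
    (∀ t < L, ω (g t) (g (t + 1)) ≠ 0) ∧ g L = g 0} with hK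
  have hne : K.Nonempty := by
    obtain ⟨i, j, hji, hij⟩ := hc
    set L₀ := i - j + 1 with hL₀
    refine ⟨L₀, by omega, fun t => p (j + t % L₀), fun t ht => ?_, by simp⟩
    have ht' : t % L₀ = t := Nat.mod_eq_of_lt ht
    show ω (p (j + t % L₀)) (p (j + (t + 1) % L₀)) ≠ 0
    rcases Nat.lt_or_ge (t + 1) L₀ with h1 | h1
    · rw [ht', Nat.mod_eq_of_lt h1]
      exact hray (j + t)
    · have h2 : t + 1 = L₀ := by omega
      have h3 : (t + 1) % L₀ = 0 := by rw [h2, Nat.mod_self]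
      rw [ht', h3]
      have h4 : j + t = i := by omega
      rw [h4]
      simpa using hij
  set k := sInf K with hkdef
  have hkK : k ∈ K := Nat.sInf_mem hne
  obtain ⟨hk1, g, hedge, hclose⟩ := hkK
  have hmin : ∀ L ∈ K, k ≤ L := fun L hL => Nat.sInf_le hL
  have hkpos : 0 < k := hk1
  have edge' : ∀ c : ℕ, ω (g (c % k)) (g ((c + 1) % k)) ≠ 0 := by
    intro c
    have hr : c % k < k := Nat.mod_lt _ hkpos
    have h1 := hedge (c % k) hr
    have h2 : (c + 1) % k = (c % k + 1) % k := by rw [Nat.mod_add_mod]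
    rcases Nat.lt_or_ge (c % k + 1) k with h3 | h3
    · rw [h2, Nat.mod_eq_of_lt h3]; exact h1
    · have h4 : c % k + 1 = k := by omega
      rw [h2, h4, Nat.mod_self]
      rw [h4, hclose] at h1
      exact h1
  refine ⟨k, g, hk1, hedge, hclose, ?_, ?_⟩
  · intro a b ha hb hab
    by_contra hne'
    rcases Nat.lt_or_ge a b with h | h
    · have : b - a ∈ K := by
        refine ⟨by omega, fun t => g (a + t), fun t ht => ?_, ?_⟩
        · exact hedge (a + t) (by omega)
        · show g (a + (b - a)) = g (a + 0)
          rw [show a + (b - a) = b by omega, ← hab, Nat.add_zero]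
      have := hmin _ this; omega
    · have hba : b < a := by omega
      have : a - b ∈ K := by
        refine ⟨by omega, fun t => g (b + t), fun t ht => ?_, ?_⟩
        · exact hedge (b + t) (by omega)
        · show g (b + (a - b)) = g (b + 0)
          rw [show b + (a - b) = a by omega, hab, Nat.add_zero]
      have := hmin _ this; omega
  · intro a b ha hb hw
    set L' := (a + k - b) % k + 1 with hL'
    have hL'K : L' ∈ K := by
      refine ⟨by omega, fun t => if t = 0 then g a else g ((b + (t - 1)) % k),
        fun t ht => ?_, ?_⟩
      · beta_reduce
        rcases Nat.eq_zero_or_pos t with rfl | htpos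
        · simp only [if_pos rfl, if_neg (Nat.one_ne_zero)]
          rw [show (1 : ℕ) - 1 = 0 by rfl, Nat.add_zero, Nat.mod_eq_of_lt hb]
          exact hw
        · rw [if_neg (by omega), if_neg (by omega)]
          have e1 : b + (t + 1 - 1) = (b + (t - 1)) + 1 := by omega
          rw [e1]
          exact edge' (b + (t - 1))
      · beta_reduce
        rw [if_neg (by omega : ¬ (L' = 0)), if_pos rfl]
        have e2 : L' - 1 = (a + k - b) % k := by omega
        rw [e2, Nat.add_mod_mod, show b + (a + k - b) = a + k by omega,
          Nat.add_mod_right, Nat.mod_eq_of_lt ha]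
    have hkL := hmin _ hL'K
    have hlt : (a + k - b) % k < k := Nat.mod_lt _ hkpos
    have hs : (a + k - b) % k = k - 1 := by omega
    have hmod : (a + k - b) % k = (k - 1) % k := by
      rw [hs, Nat.mod_eq_of_lt (by omega)]
    have h2 : (a + k - b + (b + 1)) % k = (k - 1 + (b + 1)) % k :=
      Nat.ModEq.add_right (b + 1) hmod
    rw [show a + k - b + (b + 1) = (a + 1) + k by omega,
      show k - 1 + (b + 1) = b + k by omega,
      Nat.add_mod_right, Nat.add_mod_right, Nat.mod_eq_of_lt hb] at h2
    exact h2.symm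

lemma case1 (mul : H →ₗ[ℂ] H →ₗ[ℂ] H)
    (hcomm : ∀ x y : H, mul x y = mul y x)
    (hcont : ∀ x : H, Continuous fun y => mul x y)
    (e : HilbertBasis ℕ ℂ H)
    (ω : ℕ → ℕ → ℂ)
    (hsq : ∀ i k : ℕ, (inner ℂ (e k) (mul (e i) (e i)) : ℂ) = ω i k)
    (hmb : ∀ (x : H) (j : ℕ), mul x (e j) = (inner ℂ (e j) x : ℂ) • mul (e j) (e j))
    (k : ℕ) (g : ℕ → ℕ) (hk1 : 1 ≤ k)
    (hedge : ∀ t < k, ω (g t) (g (t + 1)) ≠ 0) (hclose : g k = g 0)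
    (hginj : ∀ a b, a < k → b < k → g a = g b → a = b)
    (hshort : ∀ a b, a < k → b < k → ω (g a) (g b) ≠ 0 → b = (a + 1) % k) :
    ∃ u : H, ∀ n : ℕ, 1 ≤ n → ppow mul u n ≠ 0 := by
  classical
  have hkpos : 0 < k := hk1
  have edge' : ∀ c : ℕ, ω (g (c % k)) (g ((c + 1) % k)) ≠ 0 := by
    intro c
    have hr : c % k < k := Nat.mod_lt _ hkpos
    have h1 := hedge (c % k) hr
    have h2 : (c + 1) % k = (c % k + 1) % k := by rw [Nat.mod_add_mod]
    rcases Nat.lt_or_ge (c % k + 1) k with h3 | h3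
    · rw [h2, Nat.mod_eq_of_lt h3]; exact h1
    · have h4 : c % k + 1 = k := by omega
      rw [h2, h4, Nat.mod_self]
      rw [h4, hclose] at h1
      exact h1
  set c : ℕ → ℂ := fun t => if t < k then 1 else 0 with hc
  set u : H := ∑ t ∈ Finset.range k, e (g t) with hu
  have husum : HasSum (fun t => c t • e (g t)) u := by
    have h1 : ∀ t ∉ Finset.range k, c t • e (g t) = 0 := by
      intro t ht
      rw [Finset.mem_range] at ht
      simp [hc, ht]
    have h2 : HasSum (fun t => c t • e (g t)) (∑ t ∈ Finset.range k, c t • e (g t)) :=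
      hasSum_sum_of_ne_finset_zero h1
    have h3 : ∑ t ∈ Finset.range k, c t • e (g t) = u := by
      rw [hu]
      refine Finset.sum_congr rfl fun t ht => ?_
      rw [Finset.mem_range] at ht
      simp [hc, ht]
    rwa [h3] at h2
  have horth : ∀ s t : ℕ, (inner ℂ (e (g s)) (e (g t)) : ℂ) = if g s = g t then 1 else 0 :=
    fun s t => orthonormal_iff_ite.mp e.orthonormal (g s) (g t)
  have claim : ∀ n, 1 ≤ n → ∀ s, s < k → (inner ℂ (e (g s)) (ppow mul u n) : ℂ) ≠ 0 := by
    intro n hn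
    induction n, hn using Nat.le_induction with
    | base =>
      intro s hs
      rw [ppow_one', hu, inner_sum]
      have hzz : ∀ t ∈ Finset.range k, t ≠ s → (inner ℂ (e (g s)) (e (g t)) : ℂ) = 0 := by
        intro t ht hts
        rw [Finset.mem_range] at ht
        rw [horth, if_neg]
        intro hgg
        exact hts (hginj t s ht hs hgg.symm)
      rw [Finset.sum_eq_single s hzz (fun hs' => absurd (Finset.mem_range.mpr hs) hs')]
      rw [horth, if_pos rfl]
      exact one_ne_zero
    | succ n hn IH =>
      intro s hs
      rw [ppow_succ' mul u n hn]
      set x := ppow mul u n with hx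
      have hcm := coord_mul mul hcont e ω hmb hsq c g x u husum (g s)
      have hzero : ∀ t ∉ Finset.range k,
          c t * (inner ℂ (e (g t)) x : ℂ) * ω (g t) (g s) = 0 := by
        intro t ht
        rw [Finset.mem_range] at ht
        simp [hc, ht]
      have heq := hcm.unique (hasSum_sum_of_ne_finset_zero hzero)
      rw [heq]
      set t₀ := (s + (k - 1)) % k with ht₀
      have ht₀k : t₀ < k := Nat.mod_lt _ hkpos
      have hterm : ∀ t ∈ Finset.range k, t ≠ t₀ →
          c t * (inner ℂ (e (g t)) x : ℂ) * ω (g t) (g s) = 0 := by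
        intro t ht htne
        rw [Finset.mem_range] at ht
        by_cases hωts : ω (g t) (g s) = 0
        · rw [hωts, mul_zero]
        · exfalso
          have := hshort t s ht hs hωts
          apply htne
          rw [ht₀, this, Nat.mod_add_mod, show t + 1 + (k - 1) = t + k by omega,
            Nat.add_mod_right, Nat.mod_eq_of_lt ht]
      rw [Finset.sum_eq_single t₀ hterm (fun h => absurd (Finset.mem_range.mpr ht₀k) h)]
      have hω₀ : ω (g t₀) (g s) ≠ 0 := by
        have := edge' (s + (k - 1))
        rw [show s + (k - 1) + 1 = s + k by omega, Nat.add_mod_right,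
          Nat.mod_eq_of_lt hs] at this
        exact this
      have hc₀ : c t₀ = 1 := by simp [hc, ht₀k]
      rw [hc₀, one_mul]
      exact mul_ne_zero (IH t₀ ht₀k) hω₀
  refine ⟨u, fun n hn hcon => ?_⟩
  have := claim n hn 0 hkpos
  rw [hcon, inner_zero_right] at this
  exact this rfl


/-- Let `𝒜` be a complex separable Hilbert evolution algebra with natural
orthonormal basis `𝓑 = {e i}`. If `G(𝒜,𝓑)` contains a ray (an infinite directed path
`p 0, p 1, p 2, …` with pairwise distinct vertices), then there exists `u ∈ 𝒜` with
`u^n ≠ 0` for every `n ≥ 1`; in particular `𝒜` is not nil and not nilpotent. -/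
theorem stmt_17
    (mul : H →ₗ[ℂ] H →ₗ[ℂ] H)
    (hcomm : ∀ x y : H, mul x y = mul y x)
    (hcont : ∀ x : H, Continuous fun y => mul x y)
    (e : HilbertBasis ℕ ℂ H)
    (hnat : ∀ i j : ℕ, i ≠ j → mul (e i) (e j) = 0)
    (ω : ℕ → ℕ → ℂ)
    (hω : ∀ i k : ℕ, ω i k = structConst mul e i k)
    (p : ℕ → ℕ) (hinj : Function.Injective p)
    (hray : ∀ i : ℕ, ω (p i) (p (i + 1)) ≠ 0) :
    (∃ u : H, ∀ n : ℕ, 1 ≤ n → ppow mul u n ≠ 0) ∧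
      ¬ IsNil mul ∧ ¬ IsNilpotent' mul := by
  have hsq : ∀ i k : ℕ, (inner ℂ (e k) (mul (e i) (e i)) : ℂ) = ω i k := by
    intro i k
    rw [hω i k, structConst, e.repr_apply_apply]
  have hmb := mul_basis_right mul hcomm hcont e hnat
  have main : ∃ u : H, ∀ n : ℕ, 1 ≤ n → ppow mul u n ≠ 0 := by
    by_cases hcyc : ∃ i j : ℕ, j ≤ i ∧ ω (p i) (p j) ≠ 0
    · obtain ⟨k, g, hk1, hedge, hclose, hginj, hshort⟩ := cycle_machine ω p hray hcyc
      exact case1 mul hcomm hcont e ω hsq hmb k g hk1 hedge hclose hginj hshort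
    · push_neg at hcyc
      have htri : ∀ i j : ℕ, j ≤ i → ω (p i) (p j) = 0 := by
        intro i j hji
        by_contra hne
        exact hne (hcyc i j hji)
      exact case2 mul hcomm hcont e ω hsq hmb p hinj hray htri
  obtain ⟨u, hu⟩ := main
  refine ⟨⟨u, hu⟩, ?_, ?_⟩
  · intro hnil
    obtain ⟨n, hn, hz⟩ := hnil u
    exact hu n hn hz
  · rintro ⟨n, hn, hbot⟩
    have hmem := ppow_mem_apow mul u n hn
    rw [hbot] at hmem
    exact hu n hn ((Submodule.mem_bot ℂ).mp hmem)

end
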